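/- Matrix Pólya Positivstellensatz: let F ∈ S_t(ℝ[X₁,…,Xₙ]) be a homogeneous symmetric polynomial matrix of even degree d with F(x) ≻ 0 for all x ∈ ℝ₊ⁿ \ {0}. Then there exist N > 0, homogeneous polynomials hᵢ with nonnegative coefficients, and Aᵢ ∈ M_t(ℝ[X]) such that (X₁ + ⋯ + Xₙ)ᴺ F = Σᵢ₌₁ˡ hᵢ AᵢᵀAᵢ. -/

import Mathlib

open MvPolynomial Matrix Finset

abbrev PolyMat (n t : ℕ) := Matrix (Fin t) (Fin t) (MvPolynomial (Fin n) ℝ)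

noncomputable def evalMat {n t : ℕ} (x : Fin n → ℝ) (A : PolyMat n t) :
    Matrix (Fin t) (Fin t) ℝ :=
  A.map (MvPolynomial.eval x)

def IsMatQuadraticModule {n t : ℕ} (Q : Set (PolyMat n t)) : Prop :=
  (1 : PolyMat n t) ∈ Q ∧ (∀ F G, F ∈ Q → G ∈ Q → F + G ∈ Q) ∧
    (∀ (A F : PolyMat n t), F ∈ Q → Aᵀ * F * A ∈ Q)

def MatArchimedean {n t : ℕ} (Q : Set (PolyMat n t)) : Prop :=
  ∀ F : PolyMat n t, F.IsSymm → ∃ l : ℝ, 0 < l ∧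
    (l • (1 : PolyMat n t) + F ∈ Q ∧ l • (1 : PolyMat n t) - F ∈ Q)

def KMat {n t : ℕ} (Q : Set (PolyMat n t)) : Set (Fin n → ℝ) :=
  {x | ∀ G ∈ Q, (evalMat x G).PosSemidef}

def KSet {n : ℕ} (G : Set (MvPolynomial (Fin n) ℝ)) : Set (Fin n → ℝ) :=
  {x | ∀ g ∈ G, 0 ≤ MvPolynomial.eval x g}

def IsQuadraticModule {n : ℕ} (M : Set (MvPolynomial (Fin n) ℝ)) : Prop :=
  (1 : MvPolynomial (Fin n) ℝ) ∈ M ∧ (∀ f g, f ∈ M → g ∈ M → f + g ∈ M) ∧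
    ∀ (a f : MvPolynomial (Fin n) ℝ), f ∈ M → a ^ 2 * f ∈ M

def IsSemiringCone {n : ℕ} (M : Set (MvPolynomial (Fin n) ℝ)) : Prop :=
  (∀ f g, f ∈ M → g ∈ M → f + g ∈ M) ∧ (∀ f g, f ∈ M → g ∈ M → f * g ∈ M) ∧
    ∀ r : ℝ, 0 ≤ r → MvPolynomial.C r ∈ M

def IsScalarArchimedean {n : ℕ} (M : Set (MvPolynomial (Fin n) ℝ)) : Prop :=
  ∀ f : MvPolynomial (Fin n) ℝ, ∃ l : ℝ, 0 < l ∧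
    (MvPolynomial.C l + f ∈ M ∧ MvPolynomial.C l - f ∈ M)

def QM {n : ℕ} (G : Set (MvPolynomial (Fin n) ℝ)) : Set (MvPolynomial (Fin n) ℝ) :=
  ⋂₀ {M | IsQuadraticModule M ∧ G ⊆ M}

def SR {n : ℕ} (G : Set (MvPolynomial (Fin n) ℝ)) : Set (MvPolynomial (Fin n) ℝ) :=
  ⋂₀ {M | IsSemiringCone M ∧ G ⊆ M}

def MatQM {n t : ℕ} (𝒢 : Set (PolyMat n t)) : Set (PolyMat n t) :=
  ⋂₀ {Q | IsMatQuadraticModule Q ∧ 𝒢 ⊆ Q}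

def liftT {n : ℕ} (M : Set (MvPolynomial (Fin n) ℝ)) (t : ℕ) : Set (PolyMat n t) :=
  {F | ∃ (k : ℕ) (m : Fin k → MvPolynomial (Fin n) ℝ) (A : Fin k → PolyMat n t),
    (∀ i, m i ∈ M) ∧ F = ∑ i, m i • ((A i)ᵀ * A i)}

def P0 {n : ℕ} : Set (MvPolynomial (Fin n) ℝ) := {p | ∀ s, 0 ≤ p.coeff s}

open Nat

lemma prodXpow {n : ℕ} (k : Fin n → ℕ) :
    (∏ i, (X i : MvPolynomial (Fin n) ℝ) ^ k i) = monomial (Finsupp.equivFunOnFinite.symm k) 1 := by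
  rw [← MvPolynomial.prod_X_pow_eq_monomial]
  refine (Finset.prod_subset (Finset.subset_univ _) ?_).symm
  intro i _ hi
  have : (Finsupp.equivFunOnFinite.symm k) i = 0 := Finsupp.notMem_support_iff.mp hi
  simp only [Finsupp.coe_equivFunOnFinite_symm] at this ⊢
  simp [this]

lemma coeffTN {n N : ℕ} (μ : Fin n →₀ ℕ) (hμ : ∑ i, μ i = N) :
    coeff μ ((∑ i : Fin n, X i : MvPolynomial (Fin n) ℝ) ^ N)
      = (Nat.multinomial Finset.univ ⇑μ : ℝ) := by
  rw [Finset.sum_pow_eq_sum_piAntidiag]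
  rw [MvPolynomial.coeff_sum]
  rw [Finset.sum_eq_single_of_mem (⇑μ)
    (by rw [Finset.mem_piAntidiag]; exact ⟨hμ, fun i _ => Finset.mem_univ i⟩)]
  · rw [prodXpow, ← nsmul_eq_mul, MvPolynomial.coeff_smul, Finsupp.equivFunOnFinite_symm_coe,
      MvPolynomial.coeff_monomial, if_pos rfl]
    simp
  · intro k _ hk
    rw [prodXpow, ← nsmul_eq_mul, MvPolynomial.coeff_smul, MvPolynomial.coeff_monomial,
      if_neg, smul_zero]
    intro h
    exact hk (by rw [← h]; rfl)

lemma desccast (m k : ℕ) : ((m.descFactorial k : ℕ) : ℝ) = ∏ i ∈ Finset.range k, ((m : ℝ) - i) := by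
  rcases le_or_gt k m with h | h
  · rw [Nat.descFactorial_eq_prod_range]
    push_cast [Nat.cast_prod]
    refine Finset.prod_congr rfl fun i hi => ?_
    have : i ≤ m := le_trans (le_of_lt (Finset.mem_range.mp hi)) h
    push_cast [Nat.cast_sub this]
    ring
  · rw [Nat.descFactorial_eq_zero_iff_lt.mpr h, Nat.cast_zero]
    exact (Finset.prod_eq_zero (Finset.mem_range.mpr h) (by simp)).symm

lemma degree_eq_sum_univ {n : ℕ} (γ : Fin n →₀ ℕ) : γ.degree = ∑ i, γ i :=
  Finset.sum_subset (Finset.subset_univ _)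
    (by intro i _ hi; simpa using Finsupp.notMem_support_iff.mp hi)

lemma key_coeff {n : ℕ} (N d : ℕ) (f : MvPolynomial (Fin n) ℝ) (hf : f.IsHomogeneous d)
    (γ : Fin n →₀ ℕ) (hγ : ∑ i, γ i = N + d) :
    coeff γ ((∑ i : Fin n, X i : MvPolynomial (Fin n) ℝ) ^ N * f) * ∏ i, ((γ i)! : ℝ)
      = (N ! : ℝ) * ∑ β ∈ f.support, coeff β f * ∏ i, ((γ i).descFactorial (β i) : ℝ) := by
  conv_lhs => rw [f.as_sum]
  rw [Finset.mul_sum, MvPolynomial.coeff_sum, Finset.sum_mul, Finset.mul_sum]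
  refine Finset.sum_congr rfl fun β hβ => ?_
  have hβd : ∑ i, β i = d := by
    rw [← degree_eq_sum_univ, Finsupp.degree_eq_weight_one]
    exact hf (MvPolynomial.mem_support_iff.mp hβ)
  rw [MvPolynomial.coeff_mul_monomial']
  by_cases hle : β ≤ γ
  · rw [if_pos hle]
    have hsub : ∑ i, (γ - β) i = N := by
      have h1 : ∀ i, (γ - β) i = γ i - β i := fun i => Finsupp.tsub_apply γ β i
      have h2 : ∀ i ∈ Finset.univ, β i ≤ γ i := fun i _ => (Finsupp.le_def.mp hle) i
      calc ∑ i, (γ - β) i = ∑ i, (γ i - β i) := by simp [h1]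
        _ = (∑ i, γ i) - ∑ i, β i := (Finset.sum_tsub_distrib Finset.univ h2)
        _ = N := by rw [hγ, hβd]; omega
    rw [coeffTN _ hsub]
    -- nat identity
    have hnat : Nat.multinomial Finset.univ ⇑(γ - β) * ∏ i, (γ i)!
        = N ! * ∏ i, (γ i).descFactorial (β i) := by
      have hfac : ∀ i, (γ i)! = (γ i).descFactorial (β i) * ((γ - β) i)! := by
        intro i
        rw [Finsupp.tsub_apply, ← Nat.factorial_mul_descFactorial ((Finsupp.le_def.mp hle) i),
          Nat.mul_comm]
      calc Nat.multinomial Finset.univ ⇑(γ - β) * ∏ i, (γ i)!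
          = (∏ i, (γ i).descFactorial (β i)) *
            ((∏ i, ((γ - β) i)!) * Nat.multinomial Finset.univ ⇑(γ - β)) := by
            rw [Finset.prod_congr rfl fun i _ => hfac i, Finset.prod_mul_distrib]; ring
        _ = N ! * ∏ i, (γ i).descFactorial (β i) := by
            rw [Nat.multinomial_spec, hsub, Nat.mul_comm]
    have hR : (Nat.multinomial Finset.univ ⇑(γ - β) : ℝ) * ∏ i, ((γ i)! : ℝ)
        = (N ! : ℝ) * ∏ i, ((γ i).descFactorial (β i) : ℝ) := by
      exact_mod_cast congrArg (fun m : ℕ => (m : ℝ)) hnat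
    linear_combination coeff β f * hR
  · rw [if_neg hle, zero_mul]
    obtain ⟨i, hi⟩ : ∃ i, γ i < β i := by
      by_contra hc
      push_neg at hc
      exact hle (Finsupp.le_def.mpr hc)
    rw [Finset.prod_eq_zero (Finset.mem_univ i)
      (by rw [Nat.descFactorial_eq_zero_iff_lt.mpr hi, Nat.cast_zero])]
    ring

lemma polya_analytic {n t : ℕ} (F : PolyMat n t) (d : ℕ)
    (hFhom : ∀ i j, (F i j).IsHomogeneous d)
    (hpos : ∀ x : Fin n → ℝ, (∀ i, 0 ≤ x i) → x ≠ 0 → (evalMat x F).PosDef) :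
    ∃ s : ℕ, d + 1 ≤ s ∧ ∀ (v : Fin t → ℝ) (γ : Fin n →₀ ℕ), (∑ i, γ i) = s →
      0 ≤ ∑ β ∈ Finset.univ.biUnion (fun p : Fin t × Fin t => (F p.1 p.2).support),
        (∑ i, ∑ j, v i * v j * coeff β (F i j)) *
          ∏ i, ((γ i).descFactorial (β i) : ℝ) := by
  classical
  set B : Finset (Fin n →₀ ℕ) :=
    Finset.univ.biUnion (fun p : Fin t × Fin t => (F p.1 p.2).support) with hB
  have hBd : ∀ β ∈ B, ∑ i, β i = d := by
    intro β hβ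
    rw [Finset.mem_biUnion] at hβ
    obtain ⟨p, -, hp⟩ := hβ
    rw [← degree_eq_sum_univ, Finsupp.degree_eq_weight_one]
    exact hFhom p.1 p.2 (MvPolynomial.mem_support_iff.mp hp)
  set G : ℝ × ((Fin t → ℝ) × (Fin n → ℝ)) → ℝ := fun z =>
    ∑ β ∈ B, (∑ i, ∑ j, z.2.1 i * z.2.1 j * coeff β (F i j)) *
      ∏ i, ∏ k ∈ Finset.range (β i), (z.2.2 i - k * z.1) with hG
  have hGcont : Continuous G := by
    apply continuous_finset_sum
    intro β _
    apply Continuous.mul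
    · apply continuous_finset_sum; intro i _
      apply continuous_finset_sum; intro j _
      fun_prop
    · apply continuous_finset_prod; intro i _
      apply continuous_finset_prod; intro k _
      fun_prop
  have hG0 : ∀ (v : Fin t → ℝ) (y : Fin n → ℝ),
      G (0, v, y) = dotProduct v ((evalMat y F) *ᵥ v) := by
    intro v y
    have heval : ∀ i j, MvPolynomial.eval y (F i j)
        = ∑ β ∈ B, coeff β (F i j) * ∏ k, y k ^ β k := by
      intro i j
      rw [MvPolynomial.eval_eq']
      refine Finset.sum_subset ?_ ?_
      · intro β hβ
        exact Finset.mem_biUnion.mpr ⟨(i, j), Finset.mem_univ _, hβ⟩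
      · intro β _ hβ
        rw [MvPolynomial.notMem_support_iff.mp hβ, zero_mul]
    have hdot : dotProduct v ((evalMat y F) *ᵥ v)
        = ∑ i, v i * ∑ j, (∑ β ∈ B, coeff β (F i j) * ∏ k, y k ^ β k) * v j := by
      simp only [dotProduct, Matrix.mulVec, evalMat, Matrix.map_apply, heval]
    rw [hdot]
    calc G (0, v, y)
        = ∑ β ∈ B, ∑ i, ∑ j, v i * v j * coeff β (F i j) * ∏ k, y k ^ β k := by
          simp only [hG]
          refine Finset.sum_congr rfl fun β _ => ?_
          have hrw : (∏ i, ∏ k ∈ Finset.range (β i), (y i - (k : ℝ) * 0)) = ∏ k, y k ^ β k := by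
            refine Finset.prod_congr rfl fun i _ => ?_
            simp [Finset.prod_const]
          rw [hrw, Finset.sum_mul]
          refine Finset.sum_congr rfl fun i _ => ?_
          rw [Finset.sum_mul]
      _ = ∑ i, ∑ β ∈ B, ∑ j, v i * v j * coeff β (F i j) * ∏ k, y k ^ β k :=
          Finset.sum_comm
      _ = ∑ i, ∑ j, ∑ β ∈ B, v i * v j * coeff β (F i j) * ∏ k, y k ^ β k :=
          Finset.sum_congr rfl fun i _ => Finset.sum_comm
      _ = ∑ i, v i * ∑ j, (∑ β ∈ B, coeff β (F i j) * ∏ k, y k ^ β k) * v j := by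
          refine Finset.sum_congr rfl fun i _ => ?_
          rw [Finset.mul_sum]
          refine Finset.sum_congr rfl fun j _ => ?_
          rw [Finset.sum_mul, Finset.mul_sum]
          refine Finset.sum_congr rfl fun β _ => ?_
          ring
  set K : Set (ℝ × ((Fin t → ℝ) × (Fin n → ℝ))) :=
    {(0 : ℝ)} ×ˢ ((Metric.sphere (0 : Fin t → ℝ) 1) ×ˢ (stdSimplex ℝ (Fin n))) with hK
  have hKc : IsCompact K :=
    isCompact_singleton.prod ((isCompact_sphere 0 1).prod (isCompact_stdSimplex _ _))
  have hU : IsOpen {z : ℝ × ((Fin t → ℝ) × (Fin n → ℝ)) | 0 < G z} :=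
    isOpen_lt continuous_const hGcont
  have hKU : K ⊆ {z | 0 < G z} := by
    rintro ⟨e, v, y⟩ ⟨he, hv, hy⟩
    simp only [Set.mem_singleton_iff] at he
    subst he
    simp only [Set.mem_setOf_eq]
    rw [hG0 v y]
    have hy0 : y ≠ 0 := by
      intro h
      have := hy.2
      rw [h] at this
      simp at this
    have hv0 : v ≠ 0 := by
      intro h
      rw [Metric.mem_sphere, h] at hv
      simp at hv
    have := (hpos y hy.1 hy0).dotProduct_mulVec_pos hv0
    simpa using this
  obtain ⟨δ, hδ, hthick⟩ := hKc.exists_thickening_subset_open hU hKU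
  obtain ⟨M, hM⟩ := exists_nat_gt (1 / δ)
  refine ⟨max (d + 1) M, le_max_left _ _, ?_⟩
  set s : ℕ := max (d + 1) M with hs
  have hspos : 0 < (s : ℝ) := by
    have : d + 1 ≤ s := le_max_left _ _
    exact_mod_cast Nat.lt_of_lt_of_le (Nat.succ_pos d) this
  have hsδ : 1 / (s : ℝ) < δ := by
    have h1 : (M : ℝ) ≤ s := by exact_mod_cast le_max_right (d+1) M
    have h2 : 1 / δ < (s : ℝ) := lt_of_lt_of_le hM h1
    rw [div_lt_iff₀ hspos]
    rw [div_lt_iff₀ hδ] at h2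
    nlinarith
  intro v γ hγ
  by_cases hv : v = 0
  · subst hv; simp
  set u : Fin t → ℝ := ‖v‖⁻¹ • v with hu
  have hnv : (0:ℝ) < ‖v‖ := norm_pos_iff.mpr hv
  have huS : u ∈ Metric.sphere (0 : Fin t → ℝ) 1 := by
    rw [Metric.mem_sphere, _root_.dist_zero_right, hu, norm_smul]
    simp [abs_of_pos (inv_pos.mpr hnv), inv_mul_cancel₀ (ne_of_gt hnv)]
  set y : Fin n → ℝ := fun i => (γ i : ℝ) / s with hy
  have hyS : y ∈ stdSimplex ℝ (Fin n) := by
    constructor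
    · intro i; exact div_nonneg (Nat.cast_nonneg _) (le_of_lt hspos)
    · rw [hy]
      simp only
      rw [← Finset.sum_div]
      rw [show (∑ i, (γ i : ℝ)) = (s : ℝ) by exact_mod_cast congrArg Nat.cast hγ]
      exact div_self (ne_of_gt hspos)
  have hzK : ((1 / (s:ℝ), u, y) : ℝ × ((Fin t → ℝ) × (Fin n → ℝ)))
      ∈ Metric.thickening δ K := by
    rw [Metric.mem_thickening_iff]
    refine ⟨(0, u, y), ⟨rfl, huS, hyS⟩, ?_⟩
    rw [Prod.dist_eq]
    simp only [_root_.dist_self]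
    rw [Real.dist_eq]
    have h0 : |1 / (s:ℝ) - 0| = 1 / s := by
      rw [sub_zero, abs_of_pos (by positivity)]
    rw [h0]
    simpa using hsδ
  have hGz : 0 < G (1 / (s:ℝ), u, y) := hthick hzK
  have hdesc : ∀ β ∈ B, (∏ i, ((γ i).descFactorial (β i) : ℝ))
      = (s : ℝ) ^ d * ∏ i, ∏ k ∈ Finset.range (β i), (y i - (k:ℝ) * (1 / s)) := by
    intro β hβ
    have hfac : ∀ i, ∏ k ∈ Finset.range (β i), (y i - (k:ℝ) * (1/s))
        = (∏ k ∈ Finset.range (β i), ((γ i : ℝ) - k)) * ((1:ℝ)/s) ^ (β i) := by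
      intro i
      calc ∏ k ∈ Finset.range (β i), (y i - (k:ℝ) * (1/s))
          = ∏ k ∈ Finset.range (β i), (((γ i : ℝ) - k) * (1/s)) := by
            refine Finset.prod_congr rfl fun k _ => ?_
            rw [hy]
            field_simp
        _ = (∏ k ∈ Finset.range (β i), ((γ i : ℝ) - k)) * ((1:ℝ)/s) ^ (β i) := by
            rw [Finset.prod_mul_distrib, Finset.prod_const, Finset.card_range]
    rw [Finset.prod_congr rfl fun i (_ : i ∈ Finset.univ) => hfac i,
      Finset.prod_mul_distrib, Finset.prod_pow_eq_pow_sum, hBd β hβ]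
    rw [Finset.prod_congr rfl fun i (_ : i ∈ Finset.univ) => desccast (γ i) (β i)]
    rw [one_div, inv_pow, ← mul_assoc, mul_comm ((s:ℝ)^d), mul_assoc,
      mul_inv_cancel₀ (by positivity), mul_one]
  have hscale : ∀ β : Fin n →₀ ℕ, (∑ i, ∑ j, v i * v j * coeff β (F i j))
      = ‖v‖^2 * ∑ i, ∑ j, u i * u j * coeff β (F i j) := by
    intro β
    rw [Finset.mul_sum]
    refine Finset.sum_congr rfl fun i _ => ?_
    rw [Finset.mul_sum]
    refine Finset.sum_congr rfl fun j _ => ?_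
    rw [hu]
    simp only [Pi.smul_apply, smul_eq_mul]
    field_simp
  calc (0:ℝ) ≤ ‖v‖^2 * ((s:ℝ)^d * G (1/(s:ℝ), u, y)) := by positivity
    _ = ∑ β ∈ B, (∑ i, ∑ j, v i * v j * coeff β (F i j)) *
          ∏ i, ((γ i).descFactorial (β i) : ℝ) := by
        rw [hG]
        simp only
        rw [Finset.mul_sum, Finset.mul_sum]
        refine (Finset.sum_congr rfl fun β hβ => ?_).symm
        rw [hscale β, hdesc β hβ]
        ring

/-- Matrix version of Pólya's Positivstellensatz. -/
theorem polya_matrix {n t : ℕ} (F : PolyMat n t) (hFsym : F.IsSymm)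
    (d : ℕ) (hdeven : Even d) (hFhom : ∀ i j, (F i j).IsHomogeneous d)
    (hpos : ∀ x : Fin n → ℝ, (∀ i, 0 ≤ x i) → x ≠ 0 → (evalMat x F).PosDef) :
    ∃ N : ℕ, 0 < N ∧
      ∃ (l : ℕ) (h : Fin l → MvPolynomial (Fin n) ℝ) (A : Fin l → PolyMat n t),
        (∀ i, h i ∈ P0 ∧ ∃ e : ℕ, (h i).IsHomogeneous e) ∧
        (((∑ i : Fin n, MvPolynomial.X i : MvPolynomial (Fin n) ℝ)) ^ N) • F =
          ∑ i, h i • ((A i)ᵀ * A i) := by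
  classical
  obtain ⟨s, hds, hmain⟩ := polya_analytic F d hFhom hpos
  set T : MvPolynomial (Fin n) ℝ := ∑ i, X i with hT
  set N : ℕ := s - d with hN
  have hNpos : 0 < N := by omega
  have hNd : N + d = s := by omega
  have hThom : T.IsHomogeneous 1 :=
    MvPolynomial.IsHomogeneous.sum _ _ _ fun i _ => isHomogeneous_X _ _
  have hTNf : ∀ i j, (T ^ N * F i j).IsHomogeneous (N + d) := by
    intro i j
    have := (hThom.pow N).mul (hFhom i j)
    rwa [one_mul] at this
  set S : Finset (Fin n →₀ ℕ) :=
    Finset.univ.biUnion (fun p : Fin t × Fin t => (T ^ N * F p.1 p.2).support) with hS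
  have hSdeg : ∀ γ ∈ S, ∑ i, γ i = N + d := by
    intro γ hγ
    rw [Finset.mem_biUnion] at hγ
    obtain ⟨p, -, hp⟩ := hγ
    rw [← degree_eq_sum_univ, Finsupp.degree_eq_weight_one]
    exact hTNf p.1 p.2 (MvPolynomial.mem_support_iff.mp hp)
  set G : (Fin n →₀ ℕ) → Matrix (Fin t) (Fin t) ℝ :=
    fun γ i j => coeff γ (T ^ N * F i j) with hG
  -- PSD of coefficient matrices
  have hPSD : ∀ γ ∈ S, (G γ).PosSemidef := by
    intro γ hγ
    have hγs : ∑ i, γ i = s := by rw [hSdeg γ hγ, hNd]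
    rw [posSemidef_iff_dotProduct_mulVec]
    constructor
    · ext i j
      simp only [conjTranspose_apply, hG, star_trivial]
      change coeff γ (T ^ N * F j i) = _
      rw [hFsym.apply i j]
    · intro x
      have hdot : dotProduct (star x) ((G γ) *ᵥ x)
          = ∑ i, ∑ j, x i * x j * coeff γ (T ^ N * F i j) := by
        simp only [star_trivial, dotProduct, Matrix.mulVec, hG]
        refine Finset.sum_congr rfl fun i _ => ?_
        rw [Finset.mul_sum]
        refine Finset.sum_congr rfl fun j _ => ?_
        ring
      rw [hdot]
      set D : ℝ := ∑ β ∈ Finset.univ.biUnion (fun p : Fin t × Fin t => (F p.1 p.2).support),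
        (∑ i, ∑ j, x i * x j * coeff β (F i j)) * ∏ i, ((γ i).descFactorial (β i) : ℝ) with hD
      have hDnn : 0 ≤ D := hmain x γ hγs
      have hP : (0:ℝ) < ∏ i, ((γ i)! : ℝ) := by
        apply Finset.prod_pos
        intro i _
        exact_mod_cast Nat.factorial_pos _
      have hkey : (∑ i, ∑ j, x i * x j * coeff γ (T ^ N * F i j)) * ∏ i, ((γ i)! : ℝ)
          = (N ! : ℝ) * D := by
        rw [Finset.sum_mul]
        rw [Finset.sum_congr rfl fun i (_ : i ∈ Finset.univ) => Finset.sum_mul _ _ _]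
        have hterm : ∀ i j, (x i * x j * coeff γ (T ^ N * F i j)) * ∏ k, ((γ k)! : ℝ)
            = x i * x j * ((N ! : ℝ) *
              ∑ β ∈ (F i j).support, coeff β (F i j) * ∏ k, ((γ k).descFactorial (β k) : ℝ)) := by
          intro i j
          rw [← key_coeff N d (F i j) (hFhom i j) γ (by rw [hγs, hNd])]
          ring
        rw [Finset.sum_congr rfl fun i (_ : i ∈ Finset.univ) =>
          Finset.sum_congr rfl fun j (_ : j ∈ Finset.univ) => hterm i j]
        -- extend each support sum to the big union B
        set B : Finset (Fin n →₀ ℕ) :=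
          Finset.univ.biUnion (fun p : Fin t × Fin t => (F p.1 p.2).support) with hB
        have hext : ∀ i j, (∑ β ∈ (F i j).support,
              coeff β (F i j) * ∏ k, ((γ k).descFactorial (β k) : ℝ))
            = ∑ β ∈ B, coeff β (F i j) * ∏ k, ((γ k).descFactorial (β k) : ℝ) := by
          intro i j
          refine Finset.sum_subset ?_ ?_
          · intro β hβ
            exact Finset.mem_biUnion.mpr ⟨(i, j), Finset.mem_univ _, hβ⟩
          · intro β _ hβ
            rw [MvPolynomial.notMem_support_iff.mp hβ, zero_mul]
        rw [Finset.sum_congr rfl fun i (_ : i ∈ Finset.univ) =>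
          Finset.sum_congr rfl fun j (_ : j ∈ Finset.univ) => by rw [hext i j]]
        have swap : ∀ (f : Fin t → Fin t → (Fin n →₀ ℕ) → ℝ),
            ∑ β ∈ B, ∑ i, ∑ j, f i j β = ∑ i, ∑ j, ∑ β ∈ B, f i j β := by
          intro f
          rw [Finset.sum_comm]
          exact Finset.sum_congr rfl fun i _ => Finset.sum_comm
        conv_rhs => rw [hD]
        simp only [Finset.mul_sum, Finset.sum_mul]
        rw [swap]
        refine Finset.sum_congr rfl fun i _ => Finset.sum_congr rfl fun j _ =>
          Finset.sum_congr rfl fun β _ => by ring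
      nlinarith [mul_nonneg (Nat.cast_nonneg (N !) : (0:ℝ) ≤ N !) hDnn]
  -- decompose each coefficient matrix
  have hdecomp : ∀ γ ∈ S, ∃ Bm : Matrix (Fin t) (Fin t) ℝ, G γ = Bmᵀ * Bm := by
    intro γ hγ
    obtain ⟨Bm, hBm⟩ : ∃ B : Matrix (Fin t) (Fin t) ℝ, G γ = Bᴴ * B := by
      open scoped MatrixOrder in
      exact ⟨CFC.sqrt (G γ), by rw [← star_eq_conjTranspose, (CFC.sqrt_nonneg (G γ)).isSelfAdjoint.star_eq]; exact (CFC.sqrt_mul_sqrt_self (G γ) (hPSD γ hγ).nonneg).symm⟩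
    exact ⟨Bm, by rwa [Matrix.conjTranspose_eq_transpose_of_trivial] at hBm⟩
  choose Bm hBm using hdecomp
  set e : Fin S.card ≃ {x // x ∈ S} := S.equivFin.symm with he
  refine ⟨N, hNpos, S.card, fun i => monomial (↑(e i)) (1:ℝ),
    fun i => (Bm (↑(e i)) (e i).2).map MvPolynomial.C, ?_, ?_⟩
  · intro i
    constructor
    · intro σ
      rw [MvPolynomial.coeff_monomial]
      split <;> norm_num
    · exact ⟨(↑(e i) : Fin n →₀ ℕ).degree, isHomogeneous_monomial _ rfl⟩
  · have hterm : ∀ i : Fin S.card, ∀ a b : Fin t,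
        ((monomial (↑(e i) : Fin n →₀ ℕ) (1:ℝ) •
          (((Bm (↑(e i)) (e i).2).map MvPolynomial.C)ᵀ *
            (Bm (↑(e i)) (e i).2).map MvPolynomial.C) : PolyMat n t)) a b
        = monomial (↑(e i) : Fin n →₀ ℕ) (coeff (↑(e i)) (T ^ N * F a b)) := by
      intro i a b
      rw [Matrix.smul_apply, ← Matrix.transpose_map, ← Matrix.map_mul, ← hBm (↑(e i)) (e i).2]
      rw [Matrix.map_apply, hG, smul_eq_mul, MvPolynomial.C_apply, MvPolynomial.monomial_mul,
        add_zero, one_mul]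
    refine Matrix.ext fun a b => ?_
    rw [Matrix.sum_apply, Matrix.smul_apply, smul_eq_mul]
    rw [Finset.sum_congr rfl fun i (_ : i ∈ Finset.univ) => hterm i a b]
    have hsum : ∑ i : Fin S.card,
        monomial (↑(e i) : Fin n →₀ ℕ) (coeff (↑(e i)) (T ^ N * F a b))
        = ∑ γ ∈ S, monomial γ (coeff γ (T ^ N * F a b)) := by
      rw [← Finset.sum_coe_sort S (fun γ : Fin n →₀ ℕ =>
        monomial γ (coeff γ (T ^ N * F a b)))]
      exact Fintype.sum_equiv e _ _ (fun i => rfl)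
    rw [hsum]
    have hsupp : (T ^ N * F a b).support ⊆ S :=
      fun γ hγ => Finset.mem_biUnion.mpr ⟨(a, b), Finset.mem_univ _, hγ⟩
    conv_lhs => rw [(T ^ N * F a b).as_sum]
    exact Finset.sum_subset hsupp (fun γ _ hγ => by
      rw [MvPolynomial.notMem_support_iff.mp hγ, MvPolynomial.monomial_zero])
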